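/- Four positive real numbers u₁, u₂, u₃, u₄ are, respectively, the two side lengths and the two diagonal lengths of some nondegenerate parallelogram in the Euclidean plane if and only if they satisfy the equation u₃² + u₄² = 2u₁² + 2u₂² and the two inequalities |u₁ − u₂| < u₃ and |u₁ − u₂| < u₄. -/

import Mathlib

noncomputable def pllPt (a b : ℝ) : EuclideanSpace ℝ (Fin 2) :=
  (WithLp.equiv 2 (Fin 2 → ℝ)).symm ![a, b]

lemma pllPt_apply0 (a b : ℝ) : pllPt a b 0 = a := rfl
lemma pllPt_apply1 (a b : ℝ) : pllPt a b 1 = b := rfl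

lemma pll_eval {p q : EuclideanSpace ℝ (Fin 2)} (h : p = q) (i : Fin 2) : p i = q i := by rw [h]

lemma pllPt_sub (a b c d : ℝ) : pllPt a b - pllPt c d = pllPt (a - c) (b - d) := by
  ext i; fin_cases i <;> rfl

lemma pllPt_dist (a b c d : ℝ) :
    dist (pllPt a b) (pllPt c d) = Real.sqrt ((a - c) ^ 2 + (b - d) ^ 2) := by
  rw [EuclideanSpace.dist_eq, Fin.sum_univ_two]
  simp [pllPt, Real.dist_eq, sq_abs]

lemma pll_collinear_of_smul (A E F : EuclideanSpace ℝ (Fin 2)) (c : ℝ)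
    (h : F - E = c • (E - A)) : Collinear ℝ ({A, E, F} : Set (EuclideanSpace ℝ (Fin 2))) := by
  rw [collinear_iff_of_mem (Set.mem_insert A _)]
  refine ⟨E - A, ?_⟩
  rintro p (rfl | rfl | rfl)
  · exact ⟨0, by simp⟩
  · exact ⟨1, by simp [vadd_eq_add]⟩
  · refine ⟨1 + c, ?_⟩
    have h' := sub_eq_iff_eq_add.mp h
    rw [h', vadd_eq_add, add_smul, one_smul]
    abel

attribute [irreducible] pllPt

set_option maxHeartbeats 1000000 in
theorem parallelogram_characterization_lower
    (u₁ u₂ u₃ u₄ : ℝ) (h₁ : 0 < u₁) (h₂ : 0 < u₂) (h₃ : 0 < u₃) (h₄ : 0 < u₄) :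
    (∃ A B F E : EuclideanSpace ℝ (Fin 2),
        B - A = F - E ∧
        ¬ Collinear ℝ ({A, E, F} : Set (EuclideanSpace ℝ (Fin 2))) ∧
        dist A E = u₁ ∧ dist E F = u₂ ∧ dist A F = u₃ ∧ dist E B = u₄) ↔
      (u₃ ^ 2 + u₄ ^ 2 = 2 * u₁ ^ 2 + 2 * u₂ ^ 2 ∧ |u₁ - u₂| < u₃ ∧ |u₁ - u₂| < u₄) := by
  constructor
  · rintro ⟨A, B, F, E, hB, hcol, hu1, hu2, hu3, hu4⟩
    have ha : ‖E - A‖ = u₁ := by rw [norm_sub_rev, ← dist_eq_norm]; exact hu1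
    have hb : ‖F - E‖ = u₂ := by rw [norm_sub_rev, ← dist_eq_norm]; exact hu2
    have hab : ‖(E - A) + (F - E)‖ = u₃ := by
      rw [show (E - A) + (F - E) = F - A by abel, norm_sub_rev, ← dist_eq_norm]; exact hu3
    have hba : ‖(E - A) - (F - E)‖ = u₄ := by
      rw [show (E - A) - (F - E) = (E - A) - (B - A) by rw [hB],
        show (E - A) - (B - A) = E - B by abel, ← dist_eq_norm]; exact hu4
    have hindep : ∀ c : ℝ, F - E ≠ c • (E - A) := by
      intro c hc
      exact hcol (pll_collinear_of_smul A E F c hc)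
    have ha0 : ‖E - A‖ ≠ 0 := by rw [ha]; exact h₁.ne'
    have hlt : |(inner ℝ (E - A) (F - E) : ℝ)| < ‖E - A‖ * ‖F - E‖ := by
      rcases lt_or_eq_of_le (abs_real_inner_le_norm (E - A) (F - E)) with h | h
      · exact h
      exfalso
      rcases (abs_eq (by positivity : (0:ℝ) ≤ ‖E - A‖ * ‖F - E‖)).mp h with h' | h'
      · have h2 := inner_eq_norm_mul_iff_real.mp h'
        have h3 : (‖E - A‖⁻¹ * ‖F - E‖) • (E - A) = F - E := by
          rw [mul_smul, h2, smul_smul, inv_mul_cancel₀ ha0, one_smul]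
        exact hindep _ h3.symm
      · have h'' : (inner ℝ (E - A) (-(F - E)) : ℝ) = ‖E - A‖ * ‖-(F - E)‖ := by
          rw [inner_neg_right, norm_neg, h']; ring
        have h2 := inner_eq_norm_mul_iff_real.mp h''
        have h3 : (‖E - A‖⁻¹ * ‖-(F - E)‖) • (E - A) = -(F - E) := by
          rw [mul_smul, h2, smul_smul, inv_mul_cancel₀ ha0, one_smul]
        exact hindep (-(‖E - A‖⁻¹ * ‖-(F - E)‖)) (by rw [neg_smul, h3, neg_neg])
    rw [ha, hb] at hlt
    obtain ⟨hi1, hi2⟩ := abs_lt.mp hlt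
    have e3 : u₃ ^ 2 = u₁ ^ 2 + 2 * (inner ℝ (E - A) (F - E) : ℝ) + u₂ ^ 2 := by
      rw [← ha, ← hb, ← hab]; exact norm_add_sq_real _ _
    have e4 : u₄ ^ 2 = u₁ ^ 2 - 2 * (inner ℝ (E - A) (F - E) : ℝ) + u₂ ^ 2 := by
      rw [← ha, ← hb, ← hba]; exact norm_sub_sq_real _ _
    refine ⟨by linarith, ?_, ?_⟩
    · rcases abs_cases (u₁ - u₂) with ⟨h, _⟩ | ⟨h, _⟩ <;> nlinarith
    · rcases abs_cases (u₁ - u₂) with ⟨h, _⟩ | ⟨h, _⟩ <;> nlinarith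
  · rintro ⟨hsum, hl3, hl4⟩
    have hsq3 : (u₁ - u₂) ^ 2 < u₃ ^ 2 := by
      rcases abs_cases (u₁ - u₂) with ⟨h, _⟩ | ⟨h, _⟩ <;> nlinarith
    have hsq4 : (u₁ - u₂) ^ 2 < u₄ ^ 2 := by
      rcases abs_cases (u₁ - u₂) with ⟨h, _⟩ | ⟨h, _⟩ <;> nlinarith
    obtain ⟨x, hx⟩ : ∃ x : ℝ, 2 * u₁ * x = u₃ ^ 2 - u₁ ^ 2 - u₂ ^ 2 :=
      ⟨(u₃ ^ 2 - u₁ ^ 2 - u₂ ^ 2) / (2 * u₁), by field_simp⟩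
    have hxlt : x ^ 2 < u₂ ^ 2 := by nlinarith [mul_pos h₁ h₁, sq_nonneg x]
    obtain ⟨y, hy2, hypos⟩ : ∃ y : ℝ, y ^ 2 = u₂ ^ 2 - x ^ 2 ∧ 0 < y :=
      ⟨Real.sqrt (u₂ ^ 2 - x ^ 2), Real.sq_sqrt (by linarith), Real.sqrt_pos.mpr (by linarith)⟩
    refine ⟨pllPt 0 0, pllPt x y, pllPt (u₁ + x) y, pllPt u₁ 0, ?_, ?_, ?_, ?_, ?_, ?_⟩
    · rw [pllPt_sub, pllPt_sub]
      norm_num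
    · intro hc
      rw [collinear_iff_of_mem (Set.mem_insert (pllPt 0 0) _)] at hc
      obtain ⟨v, hv⟩ := hc
      obtain ⟨r, hr⟩ := hv (pllPt u₁ 0) (Set.mem_insert_of_mem _ (Set.mem_insert _ _))
      obtain ⟨s, hs⟩ := hv (pllPt (u₁ + x) y) (Set.mem_insert_of_mem _ (Set.mem_insert_of_mem _ rfl))
      have hr0 : (0:ℝ) = r * v 1 := by
        have h' := pll_eval hr 1
        rw [pllPt_apply1, vadd_eq_add, PiLp.add_apply, PiLp.smul_apply, pllPt_apply1,
          smul_eq_mul, add_zero] at h'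
        exact h'
      have hr1 : u₁ = r * v 0 := by
        have h' := pll_eval hr 0
        rw [pllPt_apply0, vadd_eq_add, PiLp.add_apply, PiLp.smul_apply, pllPt_apply0,
          smul_eq_mul, add_zero] at h'
        exact h'
      have hs1 : y = s * v 1 := by
        have h' := pll_eval hs 1
        rw [pllPt_apply1, vadd_eq_add, PiLp.add_apply, PiLp.smul_apply, pllPt_apply1,
          smul_eq_mul, add_zero] at h'
        exact h'
      rcases mul_eq_zero.mp hr0.symm with h | h
      · rw [h, zero_mul] at hr1; exact h₁.ne' hr1
      · rw [h, mul_zero] at hs1; exact hypos.ne' hs1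
    · rw [pllPt_dist, show (0 - u₁) ^ 2 + (0 - 0 : ℝ) ^ 2 = u₁ ^ 2 by ring,
        Real.sqrt_sq h₁.le]
    · rw [pllPt_dist, show (u₁ - (u₁ + x)) ^ 2 + (0 - y) ^ 2 = u₂ ^ 2 by nlinarith [hy2],
        Real.sqrt_sq h₂.le]
    · rw [pllPt_dist, show (0 - (u₁ + x)) ^ 2 + (0 - y) ^ 2 = u₃ ^ 2 by nlinarith [hy2, hx],
        Real.sqrt_sq h₃.le]
    · rw [pllPt_dist, show (u₁ - x) ^ 2 + (0 - y) ^ 2 = u₄ ^ 2 by nlinarith [hy2, hx],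
        Real.sqrt_sq h₄.le]
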